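/- Let s ∈ ℝ, 0 < q₀, q₁ ≤ ∞, 0 < p ≤ ∞, and ε > (d-1)/((d+1)q₀). Then the shear anisotropic Besov spaces satisfy B^{s+ε, q₁}_p(AB) ↪ B^{s, q₀}_p(AB). In particular, the key inequality is: (∑_{𝔡=1}^d ∑_{j≥0} ∑_{|[ℓ]|⪯2^j} [2^{(d+1)js} a_{𝔡,j,ℓ}]^{q₀})^{1/q₀} ≤ C_{ε,q₀,d} sup_{𝔡,j,ℓ} 2^{(d+1)j(s+ε)} a_{𝔡,j,ℓ}, for any nonnegative reals a_{𝔡,j,ℓ}, where the constant uses the convergence of ∑_{j≥0} 2^{-j((d+1)εq₀ - (d-1))} and the fact that the number of shear parameters ℓ with |ℓ_i| ≤ 2^j for i = 1,…,d-1 is (2^{j+1}+1)^{d-1} ≲ 2^{j(d-1)}. -/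
import Mathlib


open ENNReal

noncomputable section

/-- Key inequality for the embedding `B^{s+ε,q₁}_p(AB) ↪ B^{s,q₀}_p(AB)`:
for `ε > (d-1)/((d+1)q₀)` and any nonnegative array `a_{𝔡,j,ℓ}` indexed by the
directions `𝔡`, the scales `j ≥ 0` and the shear parameters `ℓ ∈ ℤ^{d-1}` with
`|ℓ_i| ≤ 2^j`, the `ℓ^{q₀}`-sum of `2^{(d+1)js} a_{𝔡,j,ℓ}` is dominated by the
supremum of `2^{(d+1)j(s+ε)} a_{𝔡,j,ℓ}`. -/
theorem shear_besov_eps_embedding_key (d : ℕ) (hd : 2 ≤ d) (s ε q₀ : ℝ)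
    (hq₀ : 0 < q₀) (hε : ((d : ℝ) - 1) / (((d : ℝ) + 1) * q₀) < ε) :
    ∃ C : ℝ, 0 < C ∧
      ∀ a : Fin d → ℕ → (Fin (d - 1) → ℤ) → ℝ≥0∞,
        (∑' 𝔡 : Fin d, ∑' j : ℕ,
            ∑ ℓ ∈ Finset.Icc (fun _ => -(2 ^ j : ℤ)) (fun _ => (2 ^ j : ℤ)),
              ((2 : ℝ≥0∞) ^ ((((d : ℝ) + 1) * (j : ℝ)) * s) * a 𝔡 j ℓ) ^ q₀) ^ (1 / q₀)
          ≤ ENNReal.ofReal C *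
            ⨆ (𝔡 : Fin d) (j : ℕ)
              (ℓ ∈ Finset.Icc (fun _ => -(2 ^ j : ℤ)) (fun _ => (2 ^ j : ℤ))),
              (2 : ℝ≥0∞) ^ ((((d : ℝ) + 1) * (j : ℝ)) * (s + ε)) * a 𝔡 j ℓ := by
  have hdR : (2:ℝ) ≤ (d:ℝ) := by exact_mod_cast hd
  have hq₀' : q₀ ≠ 0 := ne_of_gt hq₀
  have hq₀nn : (0:ℝ) ≤ q₀ := le_of_lt hq₀
  set δ : ℝ := ((d:ℝ)+1) * ε * q₀ - ((d:ℝ)-1) with hδdef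
  have hδ : 0 < δ := by
    have h1 : (0:ℝ) < ((d:ℝ)+1) * q₀ := by positivity
    have h2 := (div_lt_iff₀ h1).mp hε
    rw [hδdef]; nlinarith
  set r : ℝ≥0∞ := (2:ℝ≥0∞) ^ (-δ) with hrdef
  have hr1 : r < 1 := by
    have h : (2:ℝ≥0∞) ^ (-δ) < 2 ^ (0:ℝ) :=
      ENNReal.rpow_lt_rpow_of_exponent_lt (by norm_num) (by norm_num) (by linarith)
    simpa using h
  set K : ℝ≥0∞ := (d:ℝ≥0∞) * (2:ℝ≥0∞) ^ (2*((d:ℝ)-1)) * (1 - r)⁻¹ with hKdef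
  have hKfin : K ≠ ∞ := by
    have h1r : (1:ℝ≥0∞) - r ≠ 0 := (tsub_pos_of_lt hr1).ne'
    refine ENNReal.mul_ne_top (ENNReal.mul_ne_top (ENNReal.natCast_ne_top d) ?_) ?_
    · exact ENNReal.rpow_ne_top_of_nonneg (by nlinarith) (by norm_num)
    · simpa [ENNReal.inv_ne_top] using h1r
  have hK1fin : K ^ (1/q₀) ≠ ∞ :=
    ENNReal.rpow_ne_top_of_nonneg (by positivity) hKfin
  refine ⟨(K ^ (1/q₀)).toReal + 1, by positivity, ?_⟩
  intro a
  set M : ℝ≥0∞ := ⨆ (𝔡 : Fin d) (j : ℕ)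
      (ℓ ∈ Finset.Icc (fun _ => -(2 ^ j : ℤ)) (fun _ => (2 ^ j : ℤ))),
      (2 : ℝ≥0∞) ^ ((((d : ℝ) + 1) * (j : ℝ)) * (s + ε)) * a 𝔡 j ℓ with hMdef
  have hle : ∀ (𝔡 : Fin d) (j : ℕ) (ℓ : Fin (d-1) → ℤ), ℓ ∈ Finset.Icc (fun _ => -(2 ^ j : ℤ)) (fun _ => (2 ^ j : ℤ)) →
      (2 : ℝ≥0∞) ^ ((((d : ℝ) + 1) * (j : ℝ)) * (s + ε)) * a 𝔡 j ℓ ≤ M := by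
    intro 𝔡 j ℓ hℓ
    exact le_iSup_of_le 𝔡 (le_iSup_of_le j (le_iSup_of_le ℓ (le_iSup_of_le hℓ le_rfl)))
  -- pointwise bound
  have hpoint : ∀ (𝔡 : Fin d) (j : ℕ) (ℓ : Fin (d-1) → ℤ), ℓ ∈ Finset.Icc (fun _ => -(2 ^ j : ℤ)) (fun _ => (2 ^ j : ℤ)) →
      ((2:ℝ≥0∞) ^ ((((d:ℝ)+1)*(j:ℝ))*s) * a 𝔡 j ℓ) ^ q₀ ≤
        (2:ℝ≥0∞) ^ (-(((d:ℝ)+1)*(j:ℝ)*ε) * q₀) * M ^ q₀ := by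
    intro 𝔡 j ℓ hℓ
    have h2 : (2:ℝ≥0∞) ^ ((((d:ℝ)+1)*(j:ℝ))*s) =
        (2:ℝ≥0∞) ^ (-(((d:ℝ)+1)*(j:ℝ)*ε)) * (2:ℝ≥0∞) ^ ((((d:ℝ)+1)*(j:ℝ))*(s+ε)) := by
      rw [← ENNReal.rpow_add _ _ (by norm_num) (by norm_num)]
      ring_nf
    have h1 : (2:ℝ≥0∞) ^ ((((d:ℝ)+1)*(j:ℝ))*s) * a 𝔡 j ℓ ≤
        (2:ℝ≥0∞) ^ (-(((d:ℝ)+1)*(j:ℝ)*ε)) * M := by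
      rw [h2, mul_assoc]
      exact mul_le_mul_right (hle 𝔡 j ℓ hℓ) _
    calc ((2:ℝ≥0∞) ^ ((((d:ℝ)+1)*(j:ℝ))*s) * a 𝔡 j ℓ) ^ q₀
        ≤ ((2:ℝ≥0∞) ^ (-(((d:ℝ)+1)*(j:ℝ)*ε)) * M) ^ q₀ := ENNReal.rpow_le_rpow h1 hq₀nn
      _ = (2:ℝ≥0∞) ^ (-(((d:ℝ)+1)*(j:ℝ)*ε) * q₀) * M ^ q₀ := by
          rw [ENNReal.mul_rpow_of_nonneg _ _ hq₀nn, ← ENNReal.rpow_mul]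
  -- cardinality bound
  have hcard : ∀ j : ℕ,
      ((Finset.Icc (fun _ => -(2 ^ j : ℤ)) (fun _ => (2 ^ j : ℤ)) :
        Finset (Fin (d-1) → ℤ)).card : ℝ≥0∞) ≤ (2:ℝ≥0∞) ^ (((j:ℝ)+2)*((d:ℝ)-1)) := by
    intro j
    have hc : (Finset.Icc (fun _ => -(2 ^ j : ℤ)) (fun _ => (2 ^ j : ℤ)) :
        Finset (Fin (d-1) → ℤ)).card ≤ 2 ^ ((j+2)*(d-1)) := by
      rw [Pi.card_Icc]
      have h1 : (Finset.Icc (-(2 ^ j : ℤ)) ((2 ^ j : ℤ))).card ≤ 2 ^ (j+2) := by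
        rw [Int.card_Icc]
        rw [Int.toNat_le]
        push_cast
        have h0 : (1:ℤ) ≤ 2 ^ j := one_le_pow₀ (by norm_num)
        ring_nf
        nlinarith
      calc (∏ _i : Fin (d-1), (Finset.Icc (-(2 ^ j : ℤ)) ((2 ^ j : ℤ))).card)
          = (Finset.Icc (-(2 ^ j : ℤ)) ((2 ^ j : ℤ))).card ^ (d-1) := by
            simp [Finset.prod_const]
        _ ≤ (2 ^ (j+2)) ^ (d-1) := Nat.pow_le_pow_left h1 _
        _ = 2 ^ ((j+2)*(d-1)) := by rw [← pow_mul]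
    calc ((Finset.Icc (fun _ => -(2 ^ j : ℤ)) (fun _ => (2 ^ j : ℤ)) :
          Finset (Fin (d-1) → ℤ)).card : ℝ≥0∞)
        ≤ ((2 ^ ((j+2)*(d-1)) : ℕ) : ℝ≥0∞) := by exact_mod_cast hc
      _ = (2:ℝ≥0∞) ^ (((j+2)*(d-1) : ℕ) : ℝ) := by
          rw [ENNReal.rpow_natCast]; push_cast; ring
      _ = (2:ℝ≥0∞) ^ (((j:ℝ)+2)*((d:ℝ)-1)) := by
          congr 1
          have h1d : 1 ≤ d := by omega
          push_cast [Nat.cast_sub h1d]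
          ring
  -- per-scale bound
  have hscale : ∀ (𝔡 : Fin d) (j : ℕ),
      (∑ ℓ ∈ Finset.Icc (fun _ => -(2 ^ j : ℤ)) (fun _ => (2 ^ j : ℤ)),
        ((2:ℝ≥0∞) ^ ((((d:ℝ)+1)*(j:ℝ))*s) * a 𝔡 j ℓ) ^ q₀)
      ≤ (2:ℝ≥0∞) ^ (2*((d:ℝ)-1)) * r ^ j * M ^ q₀ := by
    intro 𝔡 j
    have hsum : (∑ ℓ ∈ Finset.Icc (fun _ => -(2 ^ j : ℤ)) (fun _ => (2 ^ j : ℤ)),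
        ((2:ℝ≥0∞) ^ ((((d:ℝ)+1)*(j:ℝ))*s) * a 𝔡 j ℓ) ^ q₀)
        ≤ ((Finset.Icc (fun _ => -(2 ^ j : ℤ)) (fun _ => (2 ^ j : ℤ)) :
            Finset (Fin (d-1) → ℤ)).card : ℝ≥0∞) *
          ((2:ℝ≥0∞) ^ (-(((d:ℝ)+1)*(j:ℝ)*ε) * q₀) * M ^ q₀) := by
      rw [← nsmul_eq_mul]
      exact Finset.sum_le_card_nsmul _ _ _ (fun ℓ hℓ => hpoint 𝔡 j ℓ hℓ)
    refine hsum.trans ?_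
    have := mul_le_mul_left (hcard j)
      ((2:ℝ≥0∞) ^ (-(((d:ℝ)+1)*(j:ℝ)*ε) * q₀) * M ^ q₀)
    refine this.trans (le_of_eq ?_)
    rw [← mul_assoc, ← ENNReal.rpow_add _ _ (by norm_num) (by norm_num)]
    have hexp : ((j:ℝ)+2)*((d:ℝ)-1) + (-(((d:ℝ)+1)*(j:ℝ)*ε) * q₀)
        = 2*((d:ℝ)-1) + (-δ) * (j:ℝ) := by rw [hδdef]; ring
    rw [hexp, ENNReal.rpow_add _ _ (by norm_num) (by norm_num)]
    congr 2
    rw [hrdef, ← ENNReal.rpow_natCast ((2:ℝ≥0∞) ^ (-δ)) j, ← ENNReal.rpow_mul]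
  -- sum over scales
  have hj : ∀ (𝔡 : Fin d), (∑' j : ℕ,
      ∑ ℓ ∈ Finset.Icc (fun _ => -(2 ^ j : ℤ)) (fun _ => (2 ^ j : ℤ)),
        ((2:ℝ≥0∞) ^ ((((d:ℝ)+1)*(j:ℝ))*s) * a 𝔡 j ℓ) ^ q₀)
      ≤ (2:ℝ≥0∞) ^ (2*((d:ℝ)-1)) * (1-r)⁻¹ * M ^ q₀ := by
    intro 𝔡
    calc (∑' j : ℕ, ∑ ℓ ∈ Finset.Icc (fun _ => -(2 ^ j : ℤ)) (fun _ => (2 ^ j : ℤ)),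
          ((2:ℝ≥0∞) ^ ((((d:ℝ)+1)*(j:ℝ))*s) * a 𝔡 j ℓ) ^ q₀)
        ≤ ∑' j : ℕ, (2:ℝ≥0∞) ^ (2*((d:ℝ)-1)) * r ^ j * M ^ q₀ :=
          ENNReal.tsum_le_tsum (fun j => hscale 𝔡 j)
      _ = (2:ℝ≥0∞) ^ (2*((d:ℝ)-1)) * (1-r)⁻¹ * M ^ q₀ := by
          rw [ENNReal.tsum_mul_right]
          congr 1
          simp_rw [mul_comm ((2:ℝ≥0∞) ^ (2*((d:ℝ)-1))) _]
          rw [ENNReal.tsum_mul_right, ENNReal.tsum_geometric, mul_comm]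
  -- sum over directions
  have hS : (∑' 𝔡 : Fin d, ∑' j : ℕ,
      ∑ ℓ ∈ Finset.Icc (fun _ => -(2 ^ j : ℤ)) (fun _ => (2 ^ j : ℤ)),
        ((2:ℝ≥0∞) ^ ((((d:ℝ)+1)*(j:ℝ))*s) * a 𝔡 j ℓ) ^ q₀) ≤ K * M ^ q₀ := by
    calc (∑' 𝔡 : Fin d, ∑' j : ℕ,
        ∑ ℓ ∈ Finset.Icc (fun _ => -(2 ^ j : ℤ)) (fun _ => (2 ^ j : ℤ)),
          ((2:ℝ≥0∞) ^ ((((d:ℝ)+1)*(j:ℝ))*s) * a 𝔡 j ℓ) ^ q₀)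
        ≤ ∑' _𝔡 : Fin d, (2:ℝ≥0∞) ^ (2*((d:ℝ)-1)) * (1-r)⁻¹ * M ^ q₀ :=
          ENNReal.tsum_le_tsum (fun 𝔡 => hj 𝔡)
      _ = K * M ^ q₀ := by
          rw [tsum_fintype]
          simp [hKdef, Finset.sum_const, mul_assoc]
  -- conclude
  calc (∑' 𝔡 : Fin d, ∑' j : ℕ,
        ∑ ℓ ∈ Finset.Icc (fun _ => -(2 ^ j : ℤ)) (fun _ => (2 ^ j : ℤ)),
          ((2:ℝ≥0∞) ^ ((((d:ℝ)+1)*(j:ℝ))*s) * a 𝔡 j ℓ) ^ q₀) ^ (1/q₀)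
      ≤ (K * M ^ q₀) ^ (1/q₀) := ENNReal.rpow_le_rpow hS (by positivity)
    _ = K ^ (1/q₀) * M := by
        rw [ENNReal.mul_rpow_of_nonneg _ _ (by positivity), ← ENNReal.rpow_mul,
          mul_one_div_cancel hq₀', ENNReal.rpow_one]
    _ ≤ ENNReal.ofReal ((K ^ (1/q₀)).toReal + 1) * M := by
        gcongr
        rw [ENNReal.ofReal_add ENNReal.toReal_nonneg zero_le_one,
          ENNReal.ofReal_toReal hK1fin]
        simp
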